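/- Any graph on $m$ vertices has at most $3^{m/3}$ maximal independent sets. -/

import Mathlib

def SimpleGraph.IsIndepSet' {V : Type*} (G : SimpleGraph V) (S : Set V) : Prop :=
  ∀ v ∈ S, ∀ w ∈ S, ¬ G.Adj v w

abbrev MIS {V : Type} (G : SimpleGraph V) : Type :=
  {S : Finset V // G.IsIndepSet' ↑S ∧ ∀ T : Finset V, S ⊆ T → G.IsIndepSet' ↑T → T = S}

lemma nat_le_rpow_third (k : ℕ) : (k : ℝ) ≤ (3:ℝ) ^ ((k:ℝ)/3) := by
  set c : ℝ := (3:ℝ) ^ ((1:ℝ)/3) with hc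
  have hc0 : 0 < c := Real.rpow_pos_of_pos (by norm_num) _
  have hc3 : c ^ 3 = 3 := by
    rw [hc, ← Real.rpow_natCast ((3:ℝ) ^ ((1:ℝ)/3)) 3, ← Real.rpow_mul (by norm_num)]
    norm_num
  have hkey : (3:ℝ) ^ ((k:ℝ)/3) = c ^ k := by
    rw [hc, ← Real.rpow_natCast ((3:ℝ) ^ ((1:ℝ)/3)) k, ← Real.rpow_mul (by norm_num)]
    ring_nf
  rw [hkey]; clear hkey
  have hc43 : (4:ℝ)/3 ≤ c := by nlinarith [hc0.le, sq_nonneg (c - 4/3), sq_nonneg (c + 4/3)]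
  induction k with
  | zero => simp
  | succ n ih =>
    rcases Nat.lt_or_ge n 3 with h | h
    · interval_cases n
      · push_cast; nlinarith
      · push_cast; nlinarith
      · push_cast; nlinarith [sq_nonneg c]
    · have hn3 : (3:ℝ) ≤ (n:ℝ) := by exact_mod_cast h
      calc ((n+1 : ℕ) : ℝ) = (n:ℝ) + 1 := by push_cast; ring
        _ ≤ (4/3) * n := by nlinarith
        _ ≤ c * c ^ n := by
            have := pow_nonneg hc0.le n
            nlinarith
        _ = c ^ (n+1) := by ring

lemma moon_moser (n : ℕ) : ∀ (V : Type) [Fintype V] [DecidableEq V] (G : SimpleGraph V),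
    Fintype.card V = n →
    (Nat.card (MIS G) : ℝ) ≤ (3:ℝ) ^ ((n:ℝ)/3) := by
  induction n using Nat.strong_induction_on with
  | _ n IH =>
  intro V _ _ G hcard
  classical
  rcases Nat.eq_zero_or_pos n with hn | hn
  · subst hn
    haveI : IsEmpty V := Fintype.card_eq_zero_iff.mp hcard
    have hsub : Subsingleton (MIS G) := by
      constructor
      rintro ⟨S, _⟩ ⟨T, _⟩
      exact Subtype.ext (Subsingleton.elim S T)
    have hle : Nat.card (MIS G) ≤ 1 := by
      rcases isEmpty_or_nonempty (MIS G) with h | h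
      · simp [Nat.card_of_isEmpty]
      · rw [Nat.card_unique]
    calc (Nat.card (MIS G) : ℝ) ≤ 1 := by exact_mod_cast hle
      _ ≤ _ := by norm_num
  · -- positive case
    set deg : V → ℕ := fun u => (Finset.univ.filter (fun w => G.Adj u w)).card with hdegdef
    have hVne : (Finset.univ : Finset V).Nonempty := by
      rw [← Finset.card_pos, Finset.card_univ, hcard]; exact hn
    obtain ⟨v, -, hvmin⟩ := Finset.exists_min_image Finset.univ deg hVne
    set Nv : Finset V := Finset.univ.filter (fun w => w = v ∨ G.Adj v w) with hNvdef
    have hmemNv : ∀ u, u ∈ Nv ↔ (u = v ∨ G.Adj v u) := by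
      intro u; simp [hNvdef]
    set Wf : V → Finset V := fun u => Finset.univ.filter (fun w => ¬(w = u ∨ G.Adj u w))
      with hWfdef
    have hmemWf : ∀ u w, w ∈ Wf u ↔ (¬ w = u ∧ ¬ G.Adj u w) := by
      intro u w; simp [hWfdef]
    have hNucard : ∀ u, (Finset.univ.filter (fun w => w = u ∨ G.Adj u w)).card = 1 + deg u := by
      intro u
      rw [Finset.filter_or, Finset.card_union_of_disjoint, Finset.filter_eq']
      · simp [hdegdef]
      · rw [Finset.disjoint_left]
        intro a ha ha'
        rw [Finset.mem_filter] at ha ha'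
        rw [ha.2] at ha'
        exact G.irrefl ha'.2
    have hWfcard : ∀ u, (1 + deg u) + (Wf u).card = n := by
      intro u
      rw [← hNucard u, hWfdef, Finset.card_filter_add_card_filter_not,
        Finset.card_univ, hcard]
    set Gu : (u : V) → SimpleGraph {x // x ∈ Wf u} := fun u => G.comap Subtype.val with hGudef
    -- every maximal independent set meets Nv
    have hmeet : ∀ S : MIS G, ∃ u, u ∈ S.1 ∧ u ∈ Nv := by
      rintro ⟨S, hSind, hSmax⟩
      by_contra hcon
      push_neg at hcon
      have hvS : v ∉ S := fun h => hcon v h ((hmemNv v).mpr (Or.inl rfl))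
      have hT : G.IsIndepSet' ↑(insert v S) := by
        intro a ha b hb
        simp only [Finset.coe_insert, Set.mem_insert_iff, Finset.mem_coe] at ha hb
        rcases ha with rfl | ha
        · rcases hb with rfl | hb
          · exact G.irrefl
          · exact fun h => hcon b hb ((hmemNv b).mpr (Or.inr h))
        · rcases hb with rfl | hb
          · exact fun h => hcon a ha ((hmemNv a).mpr (Or.inr (G.adj_symm h)))
          · exact hSind a (by simpa using ha) b (by simpa using hb)
      have := hSmax _ (Finset.subset_insert v S) hT
      exact hvS (this ▸ Finset.mem_insert_self v S)
    -- decomposition: if u ∈ S maximal, then S.subtype is maximal in Gu u and S is reconstructible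
    have hdecomp : ∀ (S : MIS G) (u : V), u ∈ S.1 →
        ((Gu u).IsIndepSet' ↑(S.1.subtype (· ∈ Wf u)) ∧
          ∀ T : Finset {x // x ∈ Wf u}, S.1.subtype (· ∈ Wf u) ⊆ T →
            (Gu u).IsIndepSet' ↑T → T = S.1.subtype (· ∈ Wf u)) ∧
        S.1 = insert u ((S.1.subtype (· ∈ Wf u)).map
          (Function.Embedding.subtype (· ∈ Wf u))) := by
      rintro ⟨S, hSind, hSmax⟩ u huS
      have hrest : ∀ w ∈ S, w ≠ u → w ∈ Wf u := by
        intro w hw hwu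
        exact (hmemWf u w).mpr ⟨hwu, hSind u (by simpa using huS) w (by simpa using hw)⟩
      have hrecon : S = insert u ((S.subtype (· ∈ Wf u)).map
          (Function.Embedding.subtype (· ∈ Wf u))) := by
        rw [Finset.subtype_map]
        ext w
        simp only [Finset.mem_insert, Finset.mem_filter]
        constructor
        · intro hw
          by_cases hwu : w = u
          · exact Or.inl hwu
          · exact Or.inr ⟨hw, hrest w hw hwu⟩
        · rintro (rfl | ⟨hw, -⟩)
          · exact huS
          · exact hw
      refine ⟨⟨?_, ?_⟩, hrecon⟩
      · intro a ha b hb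
        simp only [Finset.mem_coe, Finset.mem_subtype] at ha hb
        exact fun h => hSind ↑a (by simpa using ha) ↑b (by simpa using hb) h
      · intro T hST hTind
        set Tbig : Finset V := insert u (T.map (Function.Embedding.subtype (· ∈ Wf u)))
          with hTbigdef
        have hSsub : S ⊆ Tbig := by
          intro w hw
          by_cases hwu : w = u
          · exact hwu ▸ Finset.mem_insert_self u _
          · refine Finset.mem_insert_of_mem ?_
            rw [Finset.mem_map]
            exact ⟨⟨w, hrest w hw hwu⟩, hST (Finset.mem_subtype.mpr (by simpa using hw)), rfl⟩
        have hTbigind : G.IsIndepSet' ↑Tbig := by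
          intro a ha b hb
          simp only [hTbigdef, Finset.coe_insert, Set.mem_insert_iff, Finset.mem_coe,
            Finset.mem_map, Function.Embedding.coe_subtype] at ha hb
          rcases ha with rfl | ⟨a', ha', rfl⟩
          · rcases hb with rfl | ⟨b', hb', rfl⟩
            · exact G.irrefl
            · exact fun h => ((hmemWf a b').mp b'.2).2 h
          · rcases hb with rfl | ⟨b', hb', rfl⟩
            · exact fun h => ((hmemWf b a').mp a'.2).2 (G.adj_symm h)
            · exact hTind a' (by simpa using ha') b' (by simpa using hb')
        have hTS : Tbig = S := hSmax Tbig hSsub hTbigind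
        apply Finset.Subset.antisymm _ hST
        intro a haT
        have haTbig : (a : V) ∈ Tbig := by
          refine Finset.mem_insert_of_mem ?_
          rw [Finset.mem_map]
          exact ⟨a, haT, rfl⟩
        rw [hTS] at haTbig
        exact Finset.mem_subtype.mpr (by simpa using haTbig)
    -- the injection
    let F : MIS G → Σ u : {x // x ∈ Nv}, MIS (Gu ↑u) := fun S =>
      ⟨⟨Classical.choose (hmeet S), (Classical.choose_spec (hmeet S)).2⟩,
        ⟨S.1.subtype (· ∈ Wf (Classical.choose (hmeet S))),
          (hdecomp S _ (Classical.choose_spec (hmeet S)).1).1⟩⟩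
    have hFinj : Function.Injective F := by
      have hg : ∀ S : MIS G,
          insert ((F S).1 : V) ((F S).2.1.map (Function.Embedding.subtype _)) = S.1 := by
        intro S
        exact ((hdecomp S _ (Classical.choose_spec (hmeet S)).1).2).symm
      intro S₁ S₂ h
      apply Subtype.ext
      rw [← hg S₁, ← hg S₂, h]
    -- counting
    have hcount : Nat.card (MIS G) ≤ ∑ u : {x // x ∈ Nv}, Nat.card (MIS (Gu ↑u)) := by
      have h1 : Nat.card (MIS G) ≤ Nat.card (Σ u : {x // x ∈ Nv}, MIS (Gu ↑u)) :=
        Nat.card_le_card_of_injective F hFinj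
      simp only [Nat.card_eq_fintype_card] at h1 ⊢
      rw [Fintype.card_sigma] at h1
      convert h1 using 2 with u
    have hterm : ∀ u : {x // x ∈ Nv},
        (Nat.card (MIS (Gu ↑u)) : ℝ) ≤ (3:ℝ) ^ (((n:ℝ) - 1 - deg v)/3) := by
      intro u
      have hkn : (Wf ↑u).card < n := by
        have := hWfcard ↑u
        omega
      have hIH := IH (Wf ↑u).card hkn {x // x ∈ Wf ↑u} (Gu ↑u) (Fintype.card_coe _)
      refine hIH.trans ?_
      apply Real.rpow_le_rpow_of_exponent_le (by norm_num)
      have hdeg : deg v ≤ deg ↑u := hvmin ↑u (Finset.mem_univ _)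
      have hcardeq := hWfcard ↑u
      have : ((Wf ↑u).card : ℝ) = (n:ℝ) - 1 - deg ↑u := by
        have := congrArg (Nat.cast : ℕ → ℝ) hcardeq
        push_cast at this
        linarith
      rw [this]
      have : (deg v : ℝ) ≤ deg ↑u := by exact_mod_cast hdeg
      linarith
    have hNvcard : (Nv.card : ℝ) = 1 + deg v := by
      rw [hNvdef, hNucard v]; push_cast; ring
    calc (Nat.card (MIS G) : ℝ)
        ≤ ∑ u : {x // x ∈ Nv}, (Nat.card (MIS (Gu ↑u)) : ℝ) := by
          exact_mod_cast hcount
      _ ≤ ∑ _u : {x // x ∈ Nv}, (3:ℝ) ^ (((n:ℝ) - 1 - deg v)/3) :=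
          Finset.sum_le_sum fun u _ => hterm u
      _ = (Nv.card : ℝ) * (3:ℝ) ^ (((n:ℝ) - 1 - deg v)/3) := by
          rw [Finset.sum_const, Finset.card_univ, Fintype.card_coe, nsmul_eq_mul]
      _ = ((1 + deg v : ℕ) : ℝ) * (3:ℝ) ^ (((n:ℝ) - 1 - deg v)/3) := by
          rw [hNvcard]; push_cast; ring
      _ ≤ (3:ℝ) ^ (((1 + deg v : ℕ) : ℝ)/3) * (3:ℝ) ^ (((n:ℝ) - 1 - deg v)/3) := by
          apply mul_le_mul_of_nonneg_right (nat_le_rpow_third _)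
          exact (Real.rpow_pos_of_pos (by norm_num) _).le
      _ = (3:ℝ) ^ ((n:ℝ)/3) := by
          rw [← Real.rpow_add (by norm_num)]
          congr 1
          push_cast
          ring

open Classical in
/-- **Moon–Moser bound**: any graph on `m` vertices has at most `3^{m/3}`
maximal independent sets. -/
theorem card_maximal_indep_sets_le (m : ℕ) (G : SimpleGraph (Fin m)) :
    (Nat.card {S : Finset (Fin m) // G.IsIndepSet' ↑S ∧
        ∀ T : Finset (Fin m), S ⊆ T → G.IsIndepSet' ↑T → T = S} : ℝ) ≤
      (3 : ℝ) ^ ((m : ℝ) / 3) := by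
  exact moon_moser m (Fin m) G (Fintype.card_fin m)
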